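/- Let n ≥ 1 and let u₀, u₁, z ∈ ℝⁿ be such that 0 ∈ conv_c([u₀, u₁]), where [u₀, u₁] denotes the line segment from u₀ to u₁. Then the two skewed 1-lenses conv_c([u₁ + z, u₀ − z]) and conv_c([−u₁ + z, −u₀ − z]) have nonempty intersection. -/

import Mathlib

open Metric Set

open scoped RealInnerProductSpace

noncomputable section

/-- The `c`-dual of a set `A ⊆ ℝⁿ`. -/
def cDual {n : ℕ} (A : Set (EuclideanSpace ℝ (Fin n))) : Set (EuclideanSpace ℝ (Fin n)) :=
  {y | ∀ x ∈ A, ‖x - y‖ ≤ 1}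

/-- The `c`-hull of a set: `conv_c(A) = (A^c)^c`. -/
def cHull {n : ℕ} (A : Set (EuclideanSpace ℝ (Fin n))) : Set (EuclideanSpace ℝ (Fin n)) :=
  cDual (cDual A)

lemma mem_cDual_iff {n : ℕ} {A : Set (EuclideanSpace ℝ (Fin n))} {y : EuclideanSpace ℝ (Fin n)} :
    y ∈ cDual A ↔ ∀ x ∈ A, ‖x - y‖ ≤ 1 := Iff.rfl

lemma mem_cHull_iff {n : ℕ} {A : Set (EuclideanSpace ℝ (Fin n))} {y : EuclideanSpace ℝ (Fin n)} :
    y ∈ cHull A ↔ ∀ w ∈ cDual A, ‖w - y‖ ≤ 1 := Iff.rfl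

lemma subset_cHull {n : ℕ} (A : Set (EuclideanSpace ℝ (Fin n))) : A ⊆ cHull A := by
  intro y hy
  rw [mem_cHull_iff]
  intro w hw
  rw [norm_sub_rev]
  exact hw y hy

lemma cDual_eq_iInter {n : ℕ} (A : Set (EuclideanSpace ℝ (Fin n))) :
    cDual A = ⋂ x ∈ A, Metric.closedBall x 1 := by
  ext y
  rw [mem_cDual_iff, Set.mem_iInter₂]
  refine forall₂_congr fun x hx => ?_
  rw [Metric.mem_closedBall, dist_comm, dist_eq_norm]

lemma convex_cDual {n : ℕ} (A : Set (EuclideanSpace ℝ (Fin n))) : Convex ℝ (cDual A) := by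
  rw [cDual_eq_iInter]
  exact convex_iInter₂ fun x _ => convex_closedBall x 1

lemma isClosed_cDual {n : ℕ} (A : Set (EuclideanSpace ℝ (Fin n))) : IsClosed (cDual A) := by
  rw [cDual_eq_iInter]
  exact isClosed_biInter fun x _ => Metric.isClosed_closedBall

lemma aux_norm_le {n : ℕ} (v : EuclideanSpace ℝ (Fin n)) (h : ‖v‖ ^ 2 ≤ 1) : ‖v‖ ≤ 1 := by
  nlinarith [norm_nonneg v]

lemma sq_le_of_norm_le {n : ℕ} (v : EuclideanSpace ℝ (Fin n)) (h : ‖v‖ ≤ 1) : ‖v‖ ^ 2 ≤ 1 := by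
  nlinarith [norm_nonneg v]

/-- Key construction: for a unit vector `f` and `d` with `‖d‖ ≤ 1`, there are `k` and `w`
with `‖d ± w‖ ≤ 1`, `⟪f, k + w⟫ ≥ 1`, and `k` within distance 1 of every point of the
symmetric lens `{x : ‖d - x‖ ≤ 1, ‖d + x‖ ≤ 1}`. -/

lemma core_ineq (D2 g P Q X2 b t s s2 : ℝ)
    (hD2pos : 0 < D2) (hgle : |g| ≤ D2)
    (hA : D2 - 2 * P + X2 ≤ 1) (hB : D2 + 2 * P + X2 ≤ 1)
    (hQb : |Q| ≤ s * b) (hbt : b ≤ t) (ht0 : 0 ≤ t) (hs0 : 0 < s) (hts : t ≤ s)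
    (ht2 : t ^ 2 = 1 - D2) (hs2 : s ^ 2 = s2) :
    X2 - 2 * ((g / D2) * P + Q - (t / s) * Q) + (1 - 2 * ((t / s) * s2) + t ^ 2) ≤ 1 := by
  have e1 : (t / s) * s2 = t * s := by
    rw [← hs2]; field_simp
  have h2 : |g / D2| ≤ 1 := by
    rw [abs_div, abs_of_pos hD2pos, div_le_one hD2pos]; exact hgle
  have T1 : -(2 * ((g / D2) * P)) ≤ 2 * |P| := by
    have h1 : |(g / D2) * P| ≤ |P| := by
      calc |(g / D2) * P| = |g / D2| * |P| := abs_mul _ _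
        _ ≤ 1 * |P| := mul_le_mul_of_nonneg_right h2 (abs_nonneg P)
        _ = |P| := one_mul _
    have h3 := neg_abs_le ((g / D2) * P)
    linarith
  have T2 : -(2 * Q) + 2 * ((t / s) * Q) ≤ 2 * (s * b) - 2 * (t * b) := by
    have hco : (0 : ℝ) ≤ 2 - 2 * (t / s) := by
      have h5 : t / s ≤ 1 := (div_le_one hs0).2 hts
      linarith
    have h1 : (-2 + 2 * (t / s)) * Q ≤ |(-2 + 2 * (t / s)) * Q| := le_abs_self _
    have h2' : |(-2 + 2 * (t / s)) * Q| = (2 - 2 * (t / s)) * |Q| := by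
      rw [abs_mul, abs_of_nonpos (by linarith : (-2 + 2 * (t / s) : ℝ) ≤ 0)]
      ring
    have h3 : (2 - 2 * (t / s)) * |Q| ≤ (2 - 2 * (t / s)) * (s * b) :=
      mul_le_mul_of_nonneg_left hQb hco
    have h4 : (2 - 2 * (t / s)) * (s * b) = 2 * (s * b) - 2 * (t * b) := by
      field_simp
    have h0 : -(2 * Q) + 2 * ((t / s) * Q) = (-2 + 2 * (t / s)) * Q := by ring
    rw [h0]
    linarith
  have T3 : X2 + 2 * |P| ≤ t ^ 2 := by
    rw [ht2]
    rcases abs_cases P with ⟨h, _⟩ | ⟨h, _⟩ <;> rw [h] <;> linarith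
  have T4 : 2 * (s * b) - 2 * (t * b) ≤ 2 * (t * s) - 2 * t ^ 2 := by
    have h5 : (0 : ℝ) ≤ s - t := by linarith
    have h6 : (s - t) * b ≤ (s - t) * t := mul_le_mul_of_nonneg_left hbt h5
    nlinarith [h6]
  linarith [T1, T2, T3, T4, e1]

set_option maxHeartbeats 1000000 in
lemma key {n : ℕ} (f d : EuclideanSpace ℝ (Fin n)) (hf : ‖f‖ = 1) (hd : ‖d‖ ≤ 1) :
    ∃ k w : EuclideanSpace ℝ (Fin n),
      ‖d + w‖ ≤ 1 ∧ ‖d - w‖ ≤ 1 ∧ (1 : ℝ) ≤ ⟪f, k + w⟫ ∧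
      ∀ x : EuclideanSpace ℝ (Fin n), ‖d - x‖ ≤ 1 → ‖d + x‖ ≤ 1 → ‖x - k‖ ≤ 1 := by
  have hff : ⟪f, f⟫ = 1 := by
    rw [real_inner_self_eq_norm_sq, hf]; norm_num
  by_cases hc : ‖d‖ ^ 2 ≤ |⟪f, d⟫|
  · rcases le_or_gt 0 ⟪f, d⟫ with hg | hg
    · refine ⟨d, f - d, ?_, ?_, ?_, ?_⟩
      · rw [show d + (f - d) = f by abel, hf]
      · apply aux_norm_le
        have h1 : ‖d - (f - d)‖ ^ 2 = ‖d + d‖ ^ 2 - 2 * ⟪d + d, f⟫ + ‖f‖ ^ 2 := by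
          rw [show d - (f - d) = (d + d) - f by abel]; exact norm_sub_sq_real _ _
        have h2 : ‖d + d‖ ^ 2 = 4 * ‖d‖ ^ 2 := by
          rw [norm_add_sq_real, real_inner_self_eq_norm_sq]; ring
        have h3 : ⟪d + d, f⟫ = 2 * ⟪f, d⟫ := by
          rw [inner_add_left, real_inner_comm]; ring
        rw [abs_of_nonneg hg] at hc
        rw [h1, h2, h3, hf]; nlinarith
      · rw [show d + (f - d) = f by abel, hff]
      · intro x h1 _; rwa [norm_sub_rev]
    · refine ⟨-d, f + d, ?_, ?_, ?_, ?_⟩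
      · apply aux_norm_le
        have h1 : ‖d + (f + d)‖ ^ 2 = ‖d + d‖ ^ 2 + 2 * ⟪d + d, f⟫ + ‖f‖ ^ 2 := by
          rw [show d + (f + d) = (d + d) + f by abel]; exact norm_add_sq_real _ _
        have h2 : ‖d + d‖ ^ 2 = 4 * ‖d‖ ^ 2 := by
          rw [norm_add_sq_real, real_inner_self_eq_norm_sq]; ring
        have h3 : ⟪d + d, f⟫ = 2 * ⟪f, d⟫ := by
          rw [inner_add_left, real_inner_comm]; ring
        rw [abs_of_nonpos hg.le] at hc
        rw [h1, h2, h3, hf]; nlinarith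
      · rw [show d - (f + d) = -f by abel, norm_neg, hf]
      · rw [show -d + (f + d) = f by abel, hff]
      · intro x _ h2; rw [show x - -d = d + x by abel]; exact h2
  · push_neg at hc
    have hD2pos : 0 < ‖d‖ ^ 2 := lt_of_le_of_lt (abs_nonneg _) hc
    have hD2le : ‖d‖ ^ 2 ≤ 1 := sq_le_of_norm_le d hd
    set g : ℝ := ⟪f, d⟫ with hgdef
    set D2 : ℝ := ‖d‖ ^ 2 with hD2def
    have hgle : |g| ≤ D2 := hc.le
    have hg2 : g ^ 2 ≤ D2 ^ 2 := by nlinarith [abs_nonneg g, sq_abs g]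
    set s2 : ℝ := 1 - g ^ 2 / D2 with hs2def
    have hgd2 : g ^ 2 / D2 ≤ D2 := by
      rw [div_le_iff₀ hD2pos]; nlinarith
    have hs2pos : 0 < s2 := by
      rw [hs2def]
      have : g ^ 2 / D2 ≤ D2 := hgd2
      have h1 : D2 ≤ 1 := hD2le
      have h2 : g ^ 2 / D2 < D2 := by
        rw [div_lt_iff₀ hD2pos]; nlinarith [sq_abs g, abs_nonneg g]
      linarith
    have h1D2 : (0 : ℝ) ≤ 1 - D2 := by linarith
    set t : ℝ := Real.sqrt (1 - D2) with htdef
    set s : ℝ := Real.sqrt s2 with hsdef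
    have ht2 : t ^ 2 = 1 - D2 := Real.sq_sqrt h1D2
    have hs2' : s ^ 2 = s2 := Real.sq_sqrt hs2pos.le
    have ht0 : (0 : ℝ) ≤ t := Real.sqrt_nonneg _
    have hs0 : (0 : ℝ) < s := Real.sqrt_pos.2 hs2pos
    have hts : t ≤ s := by
      rw [htdef, hsdef]
      apply Real.sqrt_le_sqrt
      rw [hs2def]; linarith
    set fp : EuclideanSpace ℝ (Fin n) := f - (g / D2) • d with hfpdef
    have hdd : ⟪d, d⟫ = D2 := real_inner_self_eq_norm_sq d
    have hdf : ⟪d, f⟫ = g := by rw [real_inner_comm, ← hgdef]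
    have hdfp : ⟪d, fp⟫ = 0 := by
      rw [hfpdef, inner_sub_right, real_inner_smul_right, hdd, hdf]
      field_simp; ring
    have hfpd : ⟪fp, d⟫ = 0 := by rw [real_inner_comm]; exact hdfp
    have hffp : ⟪f, fp⟫ = s2 := by
      rw [hfpdef, inner_sub_right, real_inner_smul_right, hff, ← hgdef, hs2def]
      ring
    have hfp2 : ‖fp‖ ^ 2 = s2 := by
      have e1 : ‖fp‖ ^ 2 = ‖f‖ ^ 2 - 2 * ⟪f, (g / D2) • d⟫ + ‖(g / D2) • d‖ ^ 2 := by
        rw [hfpdef]; exact norm_sub_sq_real _ _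
      have e2 : ⟪f, (g / D2) • d⟫ = (g / D2) * g := by
        rw [real_inner_smul_right, ← hgdef]
      have e3 : ‖(g / D2) • d‖ ^ 2 = (g / D2) ^ 2 * D2 := by
        rw [norm_smul, mul_pow, Real.norm_eq_abs, sq_abs, ← hD2def]
      rw [e1, e2, e3, hf, hs2def]
      field_simp
      ring
    have hnfp : ‖fp‖ = s := by
      rw [← Real.sqrt_sq (norm_nonneg fp), hfp2, hsdef]
    refine ⟨f - (t / s) • fp, (t / s) • fp, ?_, ?_, ?_, ?_⟩
    · apply aux_norm_le
      have h1 : ‖d + (t / s) • fp‖ ^ 2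
          = ‖d‖ ^ 2 + 2 * ⟪d, (t / s) • fp⟫ + ‖(t / s) • fp‖ ^ 2 := norm_add_sq_real _ _
      have h2 : ⟪d, (t / s) • fp⟫ = 0 := by
        rw [real_inner_smul_right, hdfp]; ring
      have h3 : ‖(t / s) • fp‖ ^ 2 = (t / s) ^ 2 * s2 := by
        rw [norm_smul, mul_pow, Real.norm_eq_abs, sq_abs, hfp2]
      have h4 : (t / s) ^ 2 * s2 = t ^ 2 := by
        rw [← hs2']; field_simp
      rw [h1, h2, h3, h4, ← hD2def, ht2]; ring_nf; linarith
    · apply aux_norm_le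
      have h1 : ‖d - (t / s) • fp‖ ^ 2
          = ‖d‖ ^ 2 - 2 * ⟪d, (t / s) • fp⟫ + ‖(t / s) • fp‖ ^ 2 := norm_sub_sq_real _ _
      have h2 : ⟪d, (t / s) • fp⟫ = 0 := by
        rw [real_inner_smul_right, hdfp]; ring
      have h3 : ‖(t / s) • fp‖ ^ 2 = (t / s) ^ 2 * s2 := by
        rw [norm_smul, mul_pow, Real.norm_eq_abs, sq_abs, hfp2]
      have h4 : (t / s) ^ 2 * s2 = t ^ 2 := by
        rw [← hs2']; field_simp
      rw [h1, h2, h3, h4, ← hD2def, ht2]; ring_nf; linarith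
    · rw [show f - (t / s) • fp + (t / s) • fp = f by abel, hff]
    · intro x hx1 hx2
      apply aux_norm_le
      set P : ℝ := ⟪d, x⟫ with hPdef
      set Q : ℝ := ⟪fp, x⟫ with hQdef
      set X2 : ℝ := ‖x‖ ^ 2 with hX2def
      have hxd : ⟪x, d⟫ = P := by rw [real_inner_comm, ← hPdef]
      have hxfp : ⟪x, fp⟫ = Q := by rw [real_inner_comm, ← hQdef]
      have hA : D2 - 2 * P + X2 ≤ 1 := by
        have e := norm_sub_sq_real d x
        have h1 : ‖d - x‖ ^ 2 ≤ 1 := sq_le_of_norm_le _ hx1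
        rw [e, ← hD2def, ← hPdef, ← hX2def] at h1
        linarith
      have hB : D2 + 2 * P + X2 ≤ 1 := by
        have e := norm_add_sq_real d x
        have h1 : ‖d + x‖ ^ 2 ≤ 1 := sq_le_of_norm_le _ hx2
        rw [e, ← hD2def, ← hPdef, ← hX2def] at h1
        linarith
      set b : ℝ := ‖x - (P / D2) • d‖ with hbdef
      have hb0 : (0 : ℝ) ≤ b := norm_nonneg _
      have hb2 : b ^ 2 = X2 - P ^ 2 / D2 := by
        have e1 : b ^ 2 = ‖x‖ ^ 2 - 2 * ⟪x, (P / D2) • d⟫ + ‖(P / D2) • d‖ ^ 2 := by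
          rw [hbdef]; exact norm_sub_sq_real _ _
        have e2 : ⟪x, (P / D2) • d⟫ = (P / D2) * P := by
          rw [real_inner_smul_right, hxd]
        have e3 : ‖(P / D2) • d‖ ^ 2 = (P / D2) ^ 2 * D2 := by
          rw [norm_smul, mul_pow, Real.norm_eq_abs, sq_abs, ← hD2def]
        rw [e1, e2, e3, ← hX2def]
        field_simp
        ring
      have hQb : |Q| ≤ s * b := by
        have hcs := abs_real_inner_le_norm fp (x - (P / D2) • d)
        have e1 : ⟪fp, x - (P / D2) • d⟫ = Q := by
          rw [inner_sub_right, real_inner_smul_right, hfpd, ← hQdef]; ring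
        rw [e1, hnfp, ← hbdef] at hcs
        exact hcs
      have hbt : b ≤ t := by
        have hb2' : b ^ 2 ≤ t ^ 2 := by
          rw [hb2, ht2]
          have hP2 : (0 : ℝ) ≤ P ^ 2 / D2 := by positivity
          linarith
        calc b = Real.sqrt (b ^ 2) := (Real.sqrt_sq hb0).symm
          _ ≤ Real.sqrt (t ^ 2) := Real.sqrt_le_sqrt hb2'
          _ = t := Real.sqrt_sq ht0
      -- expand the goal
      have hgoal : ‖x - (f - (t / s) • fp)‖ ^ 2
          = X2 - 2 * ((g / D2) * P + Q - (t / s) * Q) + (1 - 2 * ((t / s) * s2) + t ^ 2) := by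
        have e1 : ‖x - (f - (t / s) • fp)‖ ^ 2
            = ‖x‖ ^ 2 - 2 * ⟪x, f - (t / s) • fp⟫ + ‖f - (t / s) • fp‖ ^ 2 :=
          norm_sub_sq_real _ _
        have e2 : ⟪x, f - (t / s) • fp⟫ = (g / D2) * P + Q - (t / s) * Q := by
          rw [inner_sub_right, real_inner_smul_right, hxfp]
          have e2' : ⟪x, f⟫ = (g / D2) * P + Q := by
            have e2'' : ⟪x, fp⟫ = ⟪x, f⟫ - (g / D2) * P := by
              rw [hfpdef, inner_sub_right, real_inner_smul_right, hxd]
            rw [hxfp] at e2''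
            linarith
          rw [e2']
        have e3 : ‖f - (t / s) • fp‖ ^ 2 = 1 - 2 * ((t / s) * s2) + t ^ 2 := by
          have e3' : ‖f - (t / s) • fp‖ ^ 2
              = ‖f‖ ^ 2 - 2 * ⟪f, (t / s) • fp⟫ + ‖(t / s) • fp‖ ^ 2 := norm_sub_sq_real _ _
          have e3'' : ⟪f, (t / s) • fp⟫ = (t / s) * s2 := by
            rw [real_inner_smul_right, hffp]
          have e3''' : ‖(t / s) • fp‖ ^ 2 = (t / s) ^ 2 * s2 := by
            rw [norm_smul, mul_pow, Real.norm_eq_abs, sq_abs, hfp2]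
          have e4 : (t / s) ^ 2 * s2 = t ^ 2 := by rw [← hs2']; field_simp
          rw [e3', e3'', e3''', e4, hf]; ring
        rw [e1, e2, e3, ← hX2def]
      rw [hgoal]
      exact core_ineq D2 g P Q X2 b t s s2 hD2pos hgle hA hB hQb hbt ht0 hs0 hts ht2 hs2'

/-- If `0 ∈ conv_c([u₀,u₁])`, then the two skewed `1`-lenses `conv_c([u₁+z, u₀-z])` and
`conv_c([-u₁+z, -u₀-z])` intersect. -/
theorem stmt19 (n : ℕ) (hn : 1 ≤ n) (u₀ u₁ z : EuclideanSpace ℝ (Fin n))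
    (h0 : (0 : EuclideanSpace ℝ (Fin n)) ∈ cHull (segment ℝ u₀ u₁)) :
    (cHull (segment ℝ (u₁ + z) (u₀ - z)) ∩
      cHull (segment ℝ (-u₁ + z) (-u₀ - z))).Nonempty := by
  classical
  set S₁ := segment ℝ (u₁ + z) (u₀ - z) with hS₁
  set S₂ := segment ℝ (-u₁ + z) (-u₀ - z) with hS₂
  rcases Set.eq_empty_or_nonempty (cDual S₁) with hA | ⟨a₀, ha₀⟩
  · refine ⟨-u₁ + z, ?_, subset_cHull _ (left_mem_segment ℝ _ _)⟩
    rw [mem_cHull_iff]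
    intro w hw
    rw [hA] at hw
    exact absurd hw (Set.notMem_empty w)
  rcases Set.eq_empty_or_nonempty (cDual S₂) with hB | ⟨b₀, hb₀⟩
  · refine ⟨u₁ + z, subset_cHull _ (left_mem_segment ℝ _ _), ?_⟩
    rw [mem_cHull_iff]
    intro w hw
    rw [hB] at hw
    exact absurd hw (Set.notMem_empty w)
  by_contra hcon
  rw [Set.not_nonempty_iff_eq_empty] at hcon
  have hdisj : Disjoint (cHull S₁) (cHull S₂) := Set.disjoint_iff_inter_eq_empty.2 hcon
  have hconv₁ : Convex ℝ (cHull S₁) := convex_cDual _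
  have hclosed₁ : IsClosed (cHull S₁) := isClosed_cDual _
  have hconv₂ : Convex ℝ (cHull S₂) := convex_cDual _
  have hclosed₂ : IsClosed (cHull S₂) := isClosed_cDual _
  have hbdd₁ : Bornology.IsBounded (cHull S₁) := by
    apply (Metric.isBounded_closedBall (x := a₀) (r := 1)).subset
    intro y hy
    rw [Metric.mem_closedBall, dist_eq_norm, norm_sub_rev]
    exact hy a₀ ha₀
  have hcomp₁ : IsCompact (cHull S₁) := Metric.isCompact_of_isClosed_isBounded hclosed₁ hbdd₁
  obtain ⟨φ, uu, vv, hφ₁, huv, hφ₂⟩ :=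
    geometric_hahn_banach_compact_closed hconv₁ hcomp₁ hconv₂ hclosed₂ hdisj
  set y := (InnerProductSpace.toDual ℝ (EuclideanSpace ℝ (Fin n))).symm φ with hydef
  have hy : ∀ x, ⟪y, x⟫ = φ x := fun x => InnerProductSpace.toDual_symm_apply
  have hsep : ∀ p ∈ cHull S₁, ∀ q ∈ cHull S₂, ⟪y, p⟫ < ⟪y, q⟫ := by
    intro p hp q hq
    rw [hy, hy]
    exact lt_trans (lt_trans (hφ₁ p hp) huv) (hφ₂ q hq)
  have hy0 : y ≠ 0 := by
    intro h
    have h1 := hsep (u₁ + z) (subset_cHull _ (left_mem_segment ℝ _ _))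
      (-u₁ + z) (subset_cHull _ (left_mem_segment ℝ _ _))
    rw [h] at h1
    simp at h1
  clear_value y
  set f := ‖y‖⁻¹ • y with hfdef
  have hynorm : 0 < ‖y‖ := norm_pos_iff.2 hy0
  have hf1 : ‖f‖ = 1 := by
    rw [hfdef, norm_smul, norm_inv, norm_norm]
    field_simp
  have hsepf : ∀ p ∈ cHull S₁, ∀ q ∈ cHull S₂, ⟪f, p⟫ < ⟪f, q⟫ := by
    intro p hp q hq
    rw [hfdef, real_inner_smul_left, real_inner_smul_left]
    exact mul_lt_mul_of_pos_left (hsep p hp q hq) (inv_pos.2 hynorm)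
  clear_value f
  set m : EuclideanSpace ℝ (Fin n) := ((2 : ℝ)⁻¹) • (u₀ + u₁) with hmdef
  set d₁ : EuclideanSpace ℝ (Fin n) := ((2 : ℝ)⁻¹) • (u₁ - u₀) + z with hd₁def
  set d₂ : EuclideanSpace ℝ (Fin n) := ((2 : ℝ)⁻¹) • (u₁ - u₀) - z with hd₂def
  have hmd₁ : m + d₁ = u₁ + z := by rw [hmdef, hd₁def]; module
  have hmd₁' : m - d₁ = u₀ - z := by rw [hmdef, hd₁def]; module
  have hmd₂ : -m - d₂ = -u₁ + z := by rw [hmdef, hd₂def]; module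
  have hmd₂' : -m + d₂ = -u₀ - z := by rw [hmdef, hd₂def]; module
  have hd₁n : ‖d₁‖ ≤ 1 := by
    have h1 : ‖(u₁ + z) - a₀‖ ≤ 1 := ha₀ _ (left_mem_segment ℝ _ _)
    have h2 : ‖(u₀ - z) - a₀‖ ≤ 1 := ha₀ _ (right_mem_segment ℝ _ _)
    have e : d₁ = (2 : ℝ)⁻¹ • (((u₁ + z) - a₀) - ((u₀ - z) - a₀)) := by
      rw [hd₁def]; module
    rw [e, norm_smul, Real.norm_eq_abs]
    have h3 : ‖((u₁ + z) - a₀) - ((u₀ - z) - a₀)‖ ≤ 2 := by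
      calc ‖((u₁ + z) - a₀) - ((u₀ - z) - a₀)‖ ≤ ‖(u₁ + z) - a₀‖ + ‖(u₀ - z) - a₀‖ :=
            norm_sub_le _ _
        _ ≤ 2 := by linarith
    rw [abs_of_pos (by norm_num : (0:ℝ) < 2⁻¹)]
    linarith
  have hd₂n : ‖d₂‖ ≤ 1 := by
    have h1 : ‖(-u₁ + z) - b₀‖ ≤ 1 := hb₀ _ (left_mem_segment ℝ _ _)
    have h2 : ‖(-u₀ - z) - b₀‖ ≤ 1 := hb₀ _ (right_mem_segment ℝ _ _)
    have e : d₂ = (2 : ℝ)⁻¹ • (((-u₀ - z) - b₀) - ((-u₁ + z) - b₀)) := by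
      rw [hd₂def]; module
    rw [e, norm_smul, Real.norm_eq_abs]
    have h3 : ‖((-u₀ - z) - b₀) - ((-u₁ + z) - b₀)‖ ≤ 2 := by
      calc ‖((-u₀ - z) - b₀) - ((-u₁ + z) - b₀)‖ ≤ ‖(-u₀ - z) - b₀‖ + ‖(-u₁ + z) - b₀‖ :=
            norm_sub_le _ _
        _ ≤ 2 := by linarith
    rw [abs_of_pos (by norm_num : (0:ℝ) < 2⁻¹)]
    linarith
  clear_value m d₁ d₂
  obtain ⟨k₁, w₁, hw₁a, hw₁b, hk₁f, hk₁mem⟩ := key f d₁ hf1 hd₁n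
  obtain ⟨k₂, w₂, hw₂a, hw₂b, hk₂f, hk₂mem⟩ := key f d₂ hf1 hd₂n
  have hp₁ : m + k₁ ∈ cHull S₁ := by
    rw [mem_cHull_iff]
    intro a ha
    have h1 : ‖d₁ - (a - m)‖ ≤ 1 := by
      have h := ha _ (left_mem_segment ℝ (u₁ + z) (u₀ - z))
      rw [show d₁ - (a - m) = (m + d₁) - a by abel, hmd₁]
      exact h
    have h2 : ‖d₁ + (a - m)‖ ≤ 1 := by
      have h := ha _ (right_mem_segment ℝ (u₁ + z) (u₀ - z))
      rw [show d₁ + (a - m) = -((m - d₁) - a) by abel, norm_neg, hmd₁']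
      exact h
    have h3 := hk₁mem (a - m) h1 h2
    rw [show a - (m + k₁) = (a - m) - k₁ by abel]
    exact h3
  have hp₂ : -m - k₂ ∈ cHull S₂ := by
    rw [mem_cHull_iff]
    intro a ha
    have h1 : ‖d₂ - (-(a + m))‖ ≤ 1 := by
      have h := ha _ (left_mem_segment ℝ (-u₁ + z) (-u₀ - z))
      rw [show d₂ - (-(a + m)) = -((-m - d₂) - a) by abel, norm_neg, hmd₂]
      exact h
    have h2 : ‖d₂ + (-(a + m))‖ ≤ 1 := by
      have h := ha _ (right_mem_segment ℝ (-u₁ + z) (-u₀ - z))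
      rw [show d₂ + (-(a + m)) = (-m + d₂) - a by abel, hmd₂']
      exact h
    have h3 := hk₂mem (-(a + m)) h1 h2
    rw [show a - (-m - k₂) = -((-(a + m)) - k₂) by abel, norm_neg]
    exact h3
  set w' : EuclideanSpace ℝ (Fin n) := m - (2 : ℝ)⁻¹ • (w₁ + w₂) with hw'def
  clear_value w'
  have hw'mem : w' ∈ cDual (segment ℝ u₀ u₁) := by
    have hu₀ : ‖u₀ - w'‖ ≤ 1 := by
      have e : u₀ - w' = (2 : ℝ)⁻¹ • ((w₁ - d₁) + (w₂ - d₂)) := by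
        rw [hw'def, hmdef, hd₁def, hd₂def]; module
      rw [e, norm_smul, Real.norm_eq_abs, abs_of_pos (by norm_num : (0:ℝ) < 2⁻¹)]
      have h1 : ‖w₁ - d₁‖ ≤ 1 := by rw [norm_sub_rev]; exact hw₁b
      have h2 : ‖w₂ - d₂‖ ≤ 1 := by rw [norm_sub_rev]; exact hw₂b
      have h3 : ‖(w₁ - d₁) + (w₂ - d₂)‖ ≤ 2 := by
        calc ‖(w₁ - d₁) + (w₂ - d₂)‖ ≤ ‖w₁ - d₁‖ + ‖w₂ - d₂‖ := norm_add_le _ _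
          _ ≤ 2 := by linarith
      linarith
    have hu₁ : ‖u₁ - w'‖ ≤ 1 := by
      have e : u₁ - w' = (2 : ℝ)⁻¹ • ((d₁ + w₁) + (d₂ + w₂)) := by
        rw [hw'def, hmdef, hd₁def, hd₂def]; module
      rw [e, norm_smul, Real.norm_eq_abs, abs_of_pos (by norm_num : (0:ℝ) < 2⁻¹)]
      have h3 : ‖(d₁ + w₁) + (d₂ + w₂)‖ ≤ 2 := by
        calc ‖(d₁ + w₁) + (d₂ + w₂)‖ ≤ ‖d₁ + w₁‖ + ‖d₂ + w₂‖ := norm_add_le _ _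
          _ ≤ 2 := by linarith [hw₁a, hw₂a]
      linarith
    rw [mem_cDual_iff]
    intro x hx
    obtain ⟨c₁, c₂, hc₁, hc₂, hsum, rfl⟩ := hx
    have e : (c₁ • u₀ + c₂ • u₁) - w' = c₁ • (u₀ - w') + c₂ • (u₁ - w') := by
      have e' : c₁ • (u₀ - w') + c₂ • (u₁ - w')
          = c₁ • u₀ + c₂ • u₁ - (c₁ + c₂) • w' := by
        module
      rw [e', hsum, one_smul]
    rw [e]
    calc ‖c₁ • (u₀ - w') + c₂ • (u₁ - w')‖
        ≤ ‖c₁ • (u₀ - w')‖ + ‖c₂ • (u₁ - w')‖ := norm_add_le _ _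
      _ = c₁ * ‖u₀ - w'‖ + c₂ * ‖u₁ - w'‖ := by
          rw [norm_smul, norm_smul, Real.norm_eq_abs, Real.norm_eq_abs,
            abs_of_nonneg hc₁, abs_of_nonneg hc₂]
      _ ≤ c₁ * 1 + c₂ * 1 :=
          add_le_add (mul_le_mul_of_nonneg_left hu₀ hc₁) (mul_le_mul_of_nonneg_left hu₁ hc₂)
      _ = 1 := by rw [mul_one, mul_one]; exact hsum
  have hw'n : ‖w'‖ ≤ 1 := by
    have h := h0 w' hw'mem
    rwa [sub_zero] at h
  have hlt := hsepf (m + k₁) hp₁ (-m - k₂) hp₂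
  have hid : (-m - k₂) - (m + k₁) = -((2 : ℝ) • w') - (k₁ + w₁) - (k₂ + w₂) := by
    rw [hw'def]; module
  have h1 : -⟪f, w'⟫ ≤ 1 := by
    have h := real_inner_le_norm f (-w')
    rw [inner_neg_right, norm_neg, hf1, one_mul] at h
    linarith
  have hcalc : ⟪f, -m - k₂⟫ - ⟪f, m + k₁⟫ ≤ 0 := by
    have e : ⟪f, (-m - k₂) - (m + k₁)⟫
        = -(2 * ⟪f, w'⟫) - ⟪f, k₁ + w₁⟫ - ⟪f, k₂ + w₂⟫ := by
      rw [hid, inner_sub_right, inner_sub_right, inner_neg_right, real_inner_smul_right]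
    rw [← inner_sub_right, e]
    linarith [hk₁f, hk₂f, h1]
  linarith [hlt, hcalc]
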